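/- Let n ≥ 6 and k = n - 4 + r for some r ≥ 0. Then HS_k(I(ACH_{n,r}^c)) is minimally generated by exactly the two monomials u/(x_{r+n-2} x_{r+n-1}) and u/(x_{r+2} x_{r+n}), where u = x_1 x_2 ··· x_{r+n}, and consequently HS_k(I(ACH_{n,r}^c)) does not have linear quotients. -/

import Mathlib

open Finset

/-- Edge relation of the graph `Hₙ` (one orientation). -/
def HE (n a b : ℕ) : Prop :=
  (1 ≤ a ∧ a ≤ n - 5 ∧ b = a + 1) ∨
  (a = n - 4 ∧ b = n - 2) ∨ (a = n - 2 ∧ b = n - 3) ∨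
  (a = n - 1 ∧ 2 ≤ b ∧ b ≤ n ∧ b ≠ n - 1) ∨
  (a = n ∧ 1 ≤ b ∧ b ≤ n ∧ b ≠ n - 3 ∧ b ≠ n)

/-- Edge relation of the graph `Hₙ` (symmetrized). -/
def Hedge (n a b : ℕ) : Prop := HE n a b ∨ HE n b a

def LHE (n r a b : ℕ) : Prop :=
  (n + 1 ≤ a ∧ a ≤ n + r ∧ 1 ≤ b ∧ b ≤ n ∧ b ≠ n - 3) ∨
  (n + 1 ≤ a ∧ a ≤ n + r ∧ n + 1 ≤ b ∧ b ≤ n + r ∧ a ≠ b)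

/-- Edge relation of `LH_{n,r}`. -/
def LHedge (n r a b : ℕ) : Prop := Hedge n a b ∨ LHE n r a b ∨ LHE n r b a

/-- Edge relation of `CH_{n,r}`: a shifted copy of `Hₙ` on `{r+1,…,r+n}`,
a clique on `{1,…,r}`, each clique vertex joined to `x_{r+n-1}` and `x_{r+n}`. -/
def CHedge (n r a b : ℕ) : Prop :=
  (r < a ∧ r < b ∧ Hedge n (a - r) (b - r)) ∨
  (1 ≤ a ∧ a ≤ r ∧ 1 ≤ b ∧ b ≤ r ∧ a ≠ b) ∨
  (1 ≤ a ∧ a ≤ r ∧ (b = r + n - 1 ∨ b = r + n)) ∨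
  (1 ≤ b ∧ b ≤ r ∧ (a = r + n - 1 ∨ a = r + n))

/-- Edge relation of `ACH_{n,r}`: `CH_{n,r}` plus edges from `{1,…,r}` to `x_{r+n-2}`. -/
def ACHedge (n r a b : ℕ) : Prop :=
  CHedge n r a b ∨ (1 ≤ a ∧ a ≤ r ∧ b = r + n - 2) ∨ (1 ≤ b ∧ b ≤ r ∧ a = r + n - 2)

/-- Minimal generators (as squarefree supports) of the `k`-th homological shift ideal
`HS_k(I(G^c))` of the edge ideal of the complement of a graph `G` with edge relation `E`
on vertex set `V`, whose natural order is a perfect elimination ordering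
(Herzog–Moradi–Rahimbeigi–Zhu description). -/
def hsGens (E : ℕ → ℕ → Prop) (V : Finset ℕ) (k : ℕ) : Set (Finset ℕ) :=
  {h | h ⊆ V ∧ h.card = k + 2 ∧
    ∃ t ∈ h, (∃ l ∈ h, t < l) ∧ ∀ l ∈ h, t < l → ¬ E t l}

/-- The successive-colon (linear quotients) condition for a given ordering of the
minimal generators of a squarefree monomial ideal generated in one degree. -/
def LQList (L : List (Finset ℕ)) : Prop :=
  ∀ i j : Fin L.length, i < j →
    ∃ p : Fin L.length, p < j ∧ ∃ v : ℕ,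
      L.get p \ L.get j = {v} ∧ v ∈ L.get i \ L.get j

/-- A finite set of squarefree monomials (generators of an equigenerated monomial ideal)
has linear quotients: some linear order of the generators works. -/
def HasLQ (S : Set (Finset ℕ)) : Prop :=
  ∃ L : List (Finset ℕ), L.Nodup ∧ (∀ h, h ∈ L ↔ h ∈ S) ∧ LQList L

/-- `g >_lex f` for squarefree monomials with variable order `x₁ > x₂ > ⋯`. -/
def lexGt (g f : Finset ℕ) : Prop :=
  List.Lex (· < ·) (g.sort (· ≤ ·)) (f.sort (· ≤ ·))

def fmax (h : Finset ℕ) : ℕ := h.sup id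
noncomputable def fmin (h : Finset ℕ) : ℕ := sInf (↑h : Set ℕ)
def smax (h : Finset ℕ) : ℕ := (h.erase (fmax h)).sup id

/-- The natural order on vertices is a perfect elimination ordering. -/
def IsPEO (E : ℕ → ℕ → Prop) (V : Finset ℕ) : Prop :=
  ∀ i ∈ V, ∀ j ∈ V, ∀ l ∈ V, i < j → i < l → j ≠ l → E i j → E i l → E j l

/-- A graph on `V` is chordal iff some relabeling of the vertices is a perfect
elimination ordering. -/
def ChordalOn (E : ℕ → ℕ → Prop) (V : Finset ℕ) : Prop :=
  ∃ π : ℕ → ℕ, Set.BijOn π ↑V ↑V ∧ IsPEO (fun a b => E (π a) (π b)) V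

/-- For `n ≥ 6` and `k = n-4+r`, the ideal `HS_k(I(ACH_{n,r}ᶜ))` is
minimally generated by exactly the two monomials `u/(x_{r+n-2} x_{r+n-1})` and
`u/(x_{r+2} x_{r+n})` where `u = x₁⋯x_{r+n}`; consequently it does not have linear
quotients. -/


private lemma hedge_path {n a b : ℕ} (h1 : 1 ≤ a) (h2 : a ≤ n - 5) (h3 : b = a + 1) :
    Hedge n a b := Or.inl (Or.inl ⟨h1, h2, h3⟩)

private lemma hedge_n4 {n a b : ℕ} (h1 : a = n - 4) (h2 : b = n - 2) :
    Hedge n a b := Or.inl (Or.inr (Or.inl ⟨h1, h2⟩))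

private lemma hedge_n3 {n a b : ℕ} (h1 : b = n - 2) (h2 : a = n - 3) :
    Hedge n a b := Or.inr (Or.inr (Or.inr (Or.inl ⟨h1, h2⟩)))

private lemma hedge_n1 {n a b : ℕ} (h1 : b = n - 1) (h2 : 2 ≤ a) (h3 : a ≤ n)
    (h4 : a ≠ n - 1) : Hedge n a b := Or.inr (Or.inr (Or.inr (Or.inr (Or.inl ⟨h1, h2, h3, h4⟩))))

private lemma hedge_nn {n a b : ℕ} (h1 : b = n) (h2 : 1 ≤ a) (h3 : a ≤ n)
    (h4 : a ≠ n - 3) (h5 : a ≠ n) : Hedge n a b :=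
  Or.inr (Or.inr (Or.inr (Or.inr (Or.inr ⟨h1, h2, h3, h4, h5⟩))))

private lemma ach_H {n r a b : ℕ} (ha : r < a) (hb : r < b)
    (h : Hedge n (a - r) (b - r)) : ACHedge n r a b := Or.inl (Or.inl ⟨ha, hb, h⟩)

private lemma ach_cl {n r a b : ℕ} (h1 : 1 ≤ a) (h2 : a ≤ r)
    (h3 : b = r + n - 1 ∨ b = r + n) : ACHedge n r a b :=
  Or.inl (Or.inr (Or.inr (Or.inl ⟨h1, h2, h3⟩)))

private lemma ach_x {n r a b : ℕ} (h1 : 1 ≤ a) (h2 : a ≤ r) (h3 : b = r + n - 2) :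
    ACHedge n r a b := Or.inr (Or.inl ⟨h1, h2, h3⟩)

set_option maxHeartbeats 1000000 in
private lemma ACH_set_eq (n r k : ℕ) (hn : 6 ≤ n) (hk : k = n - 4 + r) :
    hsGens (ACHedge n r) (Finset.Icc 1 (r + n)) k
      = {Finset.Icc 1 (r + n) \ {r + n - 2, r + n - 1},
         Finset.Icc 1 (r + n) \ {r + 2, r + n}} := by
  ext h
  simp only [hsGens, Set.mem_setOf_eq, Set.mem_insert_iff, Set.mem_singleton_iff]
  constructor
  · rintro ⟨hsub, hcard, t, ht, ⟨l0, hl0, hl0t⟩, H⟩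
    -- the complement of h in the vertex set has exactly two elements
    have hVcard : (Finset.Icc 1 (r + n)).card = r + n := by
      rw [Nat.card_Icc]; omega
    have hs2 : (Finset.Icc 1 (r + n) \ h).card = 2 := by
      rw [Finset.card_sdiff_of_subset hsub, hVcard, hcard]; omega
    obtain ⟨a, b, hab, hsab⟩ := Finset.card_eq_two.mp hs2
    have hrec : h = Finset.Icc 1 (r + n) \ {a, b} := by
      rw [← hsab, Finset.sdiff_sdiff_eq_self hsub]
    have hmem : ∀ x, x ∈ h ↔ (1 ≤ x ∧ x ≤ r + n ∧ x ≠ a ∧ x ≠ b) := by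
      intro x
      rw [hrec]
      simp only [Finset.mem_sdiff, Finset.mem_Icc, Finset.mem_insert,
        Finset.mem_singleton]
      tauto
    rw [hmem] at ht hl0
    obtain ⟨ht1, ht2, hta, htb⟩ := ht
    obtain ⟨hl01, hl02, hl0a, hl0b⟩ := hl0
    have key : ∀ l, 1 ≤ l → l ≤ r + n → t < l → ACHedge n r t l → l = a ∨ l = b := by
      intro l h1 h2 h3 hE
      by_contra hc
      push_neg at hc
      exact H l ((hmem l).mpr ⟨h1, h2, hc.1, hc.2⟩) h3 hE
    by_cases htr : t ≤ r
    · -- clique vertex: three neighbours above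
      have k1 := key (r + n - 2) (by omega) (by omega) (by omega)
        (ach_x (by omega) (by omega) rfl)
      have k2 := key (r + n - 1) (by omega) (by omega) (by omega)
        (ach_cl (by omega) (by omega) (Or.inl rfl))
      have k3 := key (r + n) (by omega) (by omega) (by omega)
        (ach_cl (by omega) (by omega) (Or.inr rfl))
      omega
    push_neg at htr
    by_cases h1c : t = r + 1
    · -- t = r+1 : neighbours above are r+2 and r+n
      subst h1c
      have k1 := key (r + 2) (by omega) (by omega) (by omega)
        (ach_H (by omega) (by omega) (hedge_path (by omega) (by omega) (by omega)))
      have k2 := key (r + n) (by omega) (by omega) (by omega)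
        (ach_H (by omega) (by omega) (hedge_nn (by omega) (by omega) (by omega) (by omega) (by omega)))
      right
      rw [hrec]
      congr 1
      rcases k1 with rfl | rfl
      · rcases k2 with h' | rfl
        · omega
        · rfl
      · rcases k2 with rfl | h'
        · exact Finset.pair_comm _ _
        · omega
    by_cases h2c : t ≤ r + (n - 5)
    · -- 2 ≤ t-r ≤ n-5 : three neighbours above
      have k1 := key (t + 1) (by omega) (by omega) (by omega)
        (ach_H (by omega) (by omega) (hedge_path (by omega) (by omega) (by omega)))
      have k2 := key (r + n - 1) (by omega) (by omega) (by omega)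
        (ach_H (by omega) (by omega) (hedge_n1 (by omega) (by omega) (by omega) (by omega)))
      have k3 := key (r + n) (by omega) (by omega) (by omega)
        (ach_H (by omega) (by omega) (hedge_nn (by omega) (by omega) (by omega) (by omega) (by omega)))
      omega
    by_cases h3c : t = r + (n - 4)
    · -- three neighbours above
      have k1 := key (r + n - 2) (by omega) (by omega) (by omega)
        (ach_H (by omega) (by omega) (hedge_n4 (by omega) (by omega)))
      have k2 := key (r + n - 1) (by omega) (by omega) (by omega)
        (ach_H (by omega) (by omega) (hedge_n1 (by omega) (by omega) (by omega) (by omega)))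
      have k3 := key (r + n) (by omega) (by omega) (by omega)
        (ach_H (by omega) (by omega) (hedge_nn (by omega) (by omega) (by omega) (by omega) (by omega)))
      omega
    by_cases h4c : t = r + (n - 3)
    · -- neighbours above are r+n-2 and r+n-1
      have k1 := key (r + n - 2) (by omega) (by omega) (by omega)
        (ach_H (by omega) (by omega) (hedge_n3 (by omega) (by omega)))
      have k2 := key (r + n - 1) (by omega) (by omega) (by omega)
        (ach_H (by omega) (by omega) (hedge_n1 (by omega) (by omega) (by omega) (by omega)))
      left
      rw [hrec]
      congr 1
      rcases k1 with rfl | rfl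
      · rcases k2 with h' | rfl
        · omega
        · rfl
      · rcases k2 with rfl | h'
        · exact Finset.pair_comm _ _
        · omega
    by_cases h5c : t = r + (n - 2)
    · have k1 := key (r + n - 1) (by omega) (by omega) (by omega)
        (ach_H (by omega) (by omega) (hedge_n1 (by omega) (by omega) (by omega) (by omega)))
      have k2 := key (r + n) (by omega) (by omega) (by omega)
        (ach_H (by omega) (by omega) (hedge_nn (by omega) (by omega) (by omega) (by omega) (by omega)))
      omega
    by_cases h6c : t = r + (n - 1)
    · have k1 := key (r + n) (by omega) (by omega) (by omega)
        (ach_H (by omega) (by omega) (hedge_nn (by omega) (by omega) (by omega) (by omega) (by omega)))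
      omega
    · -- t = r + n : no larger vertex
      omega
  · have hpairsub1 : ({r + n - 2, r + n - 1} : Finset ℕ) ⊆ Finset.Icc 1 (r + n) := by
      intro x hx
      simp only [Finset.mem_insert, Finset.mem_singleton] at hx
      rw [Finset.mem_Icc]
      omega
    have hpairsub2 : ({r + 2, r + n} : Finset ℕ) ⊆ Finset.Icc 1 (r + n) := by
      intro x hx
      simp only [Finset.mem_insert, Finset.mem_singleton] at hx
      rw [Finset.mem_Icc]
      omega
    have hVcard : (Finset.Icc 1 (r + n)).card = r + n := by
      rw [Nat.card_Icc]; omega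
    rintro (rfl | rfl)
    · refine ⟨Finset.sdiff_subset, ?_, r + n - 3, ?_, ⟨r + n, ?_, by omega⟩, ?_⟩
      · rw [Finset.card_sdiff_of_subset hpairsub1, hVcard,
          Finset.card_pair (by omega : r + n - 2 ≠ r + n - 1)]
        omega
      · simp only [Finset.mem_sdiff, Finset.mem_Icc, Finset.mem_insert,
          Finset.mem_singleton]
        omega
      · simp only [Finset.mem_sdiff, Finset.mem_Icc, Finset.mem_insert,
          Finset.mem_singleton]
        omega
      · intro l hl hlt hE
        simp only [Finset.mem_sdiff, Finset.mem_Icc, Finset.mem_insert,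
          Finset.mem_singleton] at hl
        unfold ACHedge CHedge Hedge HE at hE
        omega
    · refine ⟨Finset.sdiff_subset, ?_, r + 1, ?_, ⟨r + 3, ?_, by omega⟩, ?_⟩
      · rw [Finset.card_sdiff_of_subset hpairsub2, hVcard,
          Finset.card_pair (by omega : r + 2 ≠ r + n)]
        omega
      · simp only [Finset.mem_sdiff, Finset.mem_Icc, Finset.mem_insert,
          Finset.mem_singleton]
        omega
      · simp only [Finset.mem_sdiff, Finset.mem_Icc, Finset.mem_insert,
          Finset.mem_singleton]
        omega
      · intro l hl hlt hE
        simp only [Finset.mem_sdiff, Finset.mem_Icc, Finset.mem_insert,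
          Finset.mem_singleton] at hl
        unfold ACHedge CHedge Hedge HE at hE
        omega

set_option maxHeartbeats 1000000 in
theorem ACH_two_gens (n r k : ℕ) (hn : 6 ≤ n) (hk : k = n - 4 + r) :
    hsGens (ACHedge n r) (Finset.Icc 1 (r + n)) k
      = {Finset.Icc 1 (r + n) \ {r + n - 2, r + n - 1},
         Finset.Icc 1 (r + n) \ {r + 2, r + n}} ∧
    ¬ HasLQ (hsGens (ACHedge n r) (Finset.Icc 1 (r + n)) k) := by
  set H1 := Finset.Icc 1 (r + n) \ {r + n - 2, r + n - 1} with hH1def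
  set H2 := Finset.Icc 1 (r + n) \ {r + 2, r + n} with hH2def
  have heq := ACH_set_eq n r k hn hk
  refine ⟨heq, ?_⟩
  rw [heq]
  rintro ⟨L, hnd, hmemL, hLQ⟩
  have memH1 : ∀ x, x ∈ H1 ↔ (1 ≤ x ∧ x ≤ r + n ∧ x ≠ r + n - 2 ∧ x ≠ r + n - 1) := by
    intro x
    rw [hH1def]
    simp only [Finset.mem_sdiff, Finset.mem_Icc, Finset.mem_insert, Finset.mem_singleton]
    tauto
  have memH2 : ∀ x, x ∈ H2 ↔ (1 ≤ x ∧ x ≤ r + n ∧ x ≠ r + 2 ∧ x ≠ r + n) := by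
    intro x
    rw [hH2def]
    simp only [Finset.mem_sdiff, Finset.mem_Icc, Finset.mem_insert, Finset.mem_singleton]
    tauto
  have hne : H1 ≠ H2 := by
    intro he
    have h1 : r + n ∈ H1 := (memH1 _).mpr (by omega)
    rw [he, memH2] at h1
    omega
  have hH1L : H1 ∈ L := (hmemL H1).mpr (Or.inl rfl)
  have hH2L : H2 ∈ L := (hmemL H2).mpr (Or.inr rfl)
  obtain ⟨i, hi⟩ := List.mem_iff_get.mp hH1L
  obtain ⟨j, hj⟩ := List.mem_iff_get.mp hH2L
  have hij : i ≠ j := by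
    intro he
    rw [he, hj] at hi
    exact hne hi.symm
  -- an ordered pair of indices
  obtain ⟨i', j', hij'⟩ : ∃ i' j' : Fin L.length, i' < j' := by
    rcases lt_or_gt_of_ne hij with h | h
    · exact ⟨i, j, h⟩
    · exact ⟨j, i, h⟩
  obtain ⟨p, hpj, v, hv, _⟩ := hLQ i' j' hij'
  have hpS : L.get p = H1 ∨ L.get p = H2 := (hmemL _).mp (L.get_mem p)
  have hjS : L.get j' = H1 ∨ L.get j' = H2 := (hmemL _).mp (L.get_mem j')
  have hd12 : ∀ x, x ∈ H1 \ H2 ↔ (x = r + 2 ∨ x = r + n) := by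
    intro x
    simp only [Finset.mem_sdiff, memH1, memH2]
    constructor
    · rintro ⟨⟨x1, x2, x3, x4⟩, hx⟩
      by_contra hc
      push_neg at hc
      exact hx ⟨x1, x2, hc.1, hc.2⟩
    · rintro (rfl | rfl) <;>
        refine ⟨⟨by omega, by omega, by omega, by omega⟩, ?_⟩ <;>
        · rintro ⟨_, _, h3, h4⟩
          omega
  have hd21 : ∀ x, x ∈ H2 \ H1 ↔ (x = r + n - 2 ∨ x = r + n - 1) := by
    intro x
    simp only [Finset.mem_sdiff, memH1, memH2]
    constructor
    · rintro ⟨⟨x1, x2, x3, x4⟩, hx⟩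
      by_contra hc
      push_neg at hc
      exact hx ⟨x1, x2, hc.1, hc.2⟩
    · rintro (rfl | rfl) <;>
        refine ⟨⟨by omega, by omega, by omega, by omega⟩, ?_⟩ <;>
        · rintro ⟨_, _, h3, h4⟩
          omega
  rcases hpS with hp | hp <;> rcases hjS with hjv | hjv <;> rw [hp, hjv] at hv
  · rw [Finset.sdiff_self] at hv
    exact Finset.singleton_ne_empty v hv.symm
  · have m1 : r + 2 ∈ H1 \ H2 := (hd12 _).mpr (Or.inl rfl)
    have m2 : r + n ∈ H1 \ H2 := (hd12 _).mpr (Or.inr rfl)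
    rw [hv, Finset.mem_singleton] at m1 m2
    omega
  · have m1 : r + n - 2 ∈ H2 \ H1 := (hd21 _).mpr (Or.inl rfl)
    have m2 : r + n - 1 ∈ H2 \ H1 := (hd21 _).mpr (Or.inr rfl)
    rw [hv, Finset.mem_singleton] at m1 m2
    omega
  · rw [Finset.sdiff_self] at hv
    exact Finset.singleton_ne_empty v hv.symm
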